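/- Let $B$ be a continuous random field on $\mathcal S^N$ such that for every $K>0$ there is an a.s. finite random constant $C_K$ with $\sup_{f\in\mathcal L^{2K}(\mathcal S^N)}\lambda(\{x:|B(x)-f(x)|\le\epsilon\})\le C_K\,\epsilon$ for all $\epsilon\in(0,1)$. Assume each difference $B_m-B_{m'}$ ($m\ne m'$) of a vector field $B=(B_1,\dots,B_M)$ satisfies this property. Then the map $\phi^\omega$ of the continuum Schelling model, restricted to $\mathcal L^K_M(\mathcal S^N)$, is a.s. Lipschitz continuous for the supremum norm, with Lipschitz constant at most $2M(M-1)C_K$. -/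

import Mathlib

open MeasureTheory

/-- The plurality function: `plur v = some m` iff `v m` is the unique strict maximum of `v`. -/
noncomputable def plur {M : ℕ} (v : Fin M → ℝ) : Option (Fin M) :=
  if h : ∃ m, ∀ m', m' ≠ m → v m' < v m then some h.choose else none

/-- The class `𝓛^K` on the torus: sup norm at most `K·2^N` and coordinatewise Lipschitz
constant at most `K·2^{N-1}`. -/
def MemLKTorus (N : ℕ) (R : ℝ) [Fact (0 < R)] (K : ℝ)
    (f : (Fin N → AddCircle R) → ℝ) : Prop :=
  (∀ x, |f x| ≤ K * 2 ^ N) ∧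
  ∀ k : Fin N, ∀ x x' : Fin N → AddCircle R, (∀ j, j ≠ k → x j = x' j) →
    |f x - f x'| ≤ K * 2 ^ (N - 1) * ‖x k - x' k‖

lemma plur_eq_some_iff {M : ℕ} (v : Fin M → ℝ) (m : Fin M) :
    plur v = some m ↔ ∀ m', m' ≠ m → v m' < v m := by
  constructor
  · intro h
    unfold plur at h
    split at h
    · rename_i hex
      rw [Option.some_inj] at h
      exact h ▸ hex.choose_spec
    · exact absurd h (by simp)
  · intro hm
    have hex : ∃ m, ∀ m', m' ≠ m → v m' < v m := ⟨m, hm⟩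
    unfold plur
    rw [dif_pos hex, Option.some_inj]
    by_contra hne
    exact lt_asymm (hex.choose_spec m (fun e => hne e.symm)) (hm _ hne)

lemma memLK_telescope {N : ℕ} {R : ℝ} [Fact (0 < R)] {K : ℝ}
    {f : (Fin N → AddCircle R) → ℝ} (hf : MemLKTorus N R K f)
    (x x' : Fin N → AddCircle R) :
    |f x - f x'| ≤ ∑ k : Fin N, K * 2 ^ (N - 1) * ‖x k - x' k‖ := by
  set u : ℕ → (Fin N → AddCircle R) := fun i j => if (j : ℕ) < i then x' j else x j with hu
  have main : ∀ i : ℕ, i ≤ N →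
      |f (u i) - f x| ≤
      ∑ k ∈ Finset.univ.filter fun k : Fin N => (k : ℕ) < i,
        K * 2 ^ (N - 1) * ‖x k - x' k‖ := by
    intro i
    induction i with
    | zero =>
      intro _
      have : u 0 = x := by funext j; simp [hu]
      simp [this]
    | succ n ih =>
      intro hn
      have hnN : n < N := hn
      have ihn := ih (le_of_lt hnN)
      have hdiff : ∀ j : Fin N, j ≠ ⟨n, hnN⟩ → u (n + 1) j = u n j := by
        intro j hj
        simp only [hu]
        rcases lt_trichotomy (j : ℕ) n with h | h | h
        · simp [h, Nat.lt_succ_of_lt h]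
        · exact absurd (Fin.ext h) hj
        · have h1 : ¬ (j : ℕ) < n := by omega
          have h2 : ¬ (j : ℕ) < n + 1 := by omega
          simp [h1, h2]
      have step := hf.2 ⟨n, hnN⟩ (u (n + 1)) (u n) hdiff
      have hvn : u (n + 1) ⟨n, hnN⟩ = x' ⟨n, hnN⟩ := by simp [hu]
      have hun : u n ⟨n, hnN⟩ = x ⟨n, hnN⟩ := by simp [hu]
      rw [hvn, hun, norm_sub_rev] at step
      have hins : (Finset.univ.filter fun k : Fin N => (k : ℕ) < n + 1)
          = insert ⟨n, hnN⟩ (Finset.univ.filter fun k : Fin N => (k : ℕ) < n) := by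
        ext k
        simp only [Finset.mem_filter, Finset.mem_insert, Finset.mem_univ, true_and]
        constructor
        · intro hk
          rcases Nat.lt_succ_iff_lt_or_eq.mp hk with h | h
          · exact Or.inr h
          · exact Or.inl (Fin.ext h)
        · rintro (rfl | h)
          · exact Nat.lt_succ_self n
          · exact Nat.lt_succ_of_lt h
      rw [hins, Finset.sum_insert (by simp)]
      calc |f (u (n + 1)) - f x|
          ≤ |f (u (n + 1)) - f (u n)| + |f (u n) - f x| := abs_sub_le _ _ _
        _ ≤ K * 2 ^ (N - 1) * ‖x ⟨n, hnN⟩ - x' ⟨n, hnN⟩‖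
            + ∑ k ∈ Finset.univ.filter fun k : Fin N => (k : ℕ) < n,
              K * 2 ^ (N - 1) * ‖x k - x' k‖ := add_le_add step ihn
  have hN := main N le_rfl
  have hx' : u N = x' := by funext j; simp [hu, j.isLt]
  have huniv : (Finset.univ.filter fun k : Fin N => (k : ℕ) < N) = Finset.univ := by
    ext k; simp [k.isLt]
  rw [hx', huniv] at hN
  rw [abs_sub_comm]
  exact hN

lemma memLK_continuous {N : ℕ} {R : ℝ} [Fact (0 < R)] {K : ℝ} (hK : 0 ≤ K)
    {f : (Fin N → AddCircle R) → ℝ} (hf : MemLKTorus N R K f) : Continuous f := by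
  have hC : (0 : ℝ) ≤ N * (K * 2 ^ (N - 1)) := by positivity
  refine (LipschitzWith.of_dist_le_mul (K := Real.toNNReal (N * (K * 2 ^ (N - 1))))
    (f := f) ?_).continuous
  intro a b
  rw [Real.dist_eq, Real.coe_toNNReal _ hC]
  calc |f a - f b| ≤ ∑ k : Fin N, K * 2 ^ (N - 1) * ‖a k - b k‖ := memLK_telescope hf a b
    _ ≤ ∑ _k : Fin N, K * 2 ^ (N - 1) * dist a b := by
        refine Finset.sum_le_sum fun k _ => ?_
        rw [← dist_eq_norm]
        exact mul_le_mul_of_nonneg_left (dist_le_pi_dist a b k) (by positivity)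
    _ = N * (K * 2 ^ (N - 1)) * dist a b := by
        rw [Finset.sum_const, Finset.card_univ, Fintype.card_fin, nsmul_eq_mul]; ring
lemma memLK_combo {N : ℕ} {R : ℝ} [Fact (0 < R)] {K2 : ℝ}
    {z z1 : (Fin N → AddCircle R) → ℝ} (hz : MemLKTorus N R K2 z)
    (hz1 : MemLKTorus N R K2 z1) {t : ℝ} (ht0 : 0 ≤ t) (ht1 : t ≤ 1) :
    MemLKTorus N R K2 (fun x => z x + t * (z1 x - z x)) := by
  constructor
  · intro x
    have h1 := hz.1 x
    have h2 := hz1.1 x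
    show |z x + t * (z1 x - z x)| ≤ K2 * 2 ^ N
    have heq0 : z x + t * (z1 x - z x) = (1 - t) * z x + t * z1 x := by ring
    rw [heq0]
    calc |(1 - t) * z x + t * z1 x| ≤ |(1 - t) * z x| + |t * z1 x| := abs_add_le _ _
      _ = (1 - t) * |z x| + t * |z1 x| := by
          rw [abs_mul, abs_mul, abs_of_nonneg (by linarith), abs_of_nonneg ht0]
      _ ≤ (1 - t) * (K2 * 2 ^ N) + t * (K2 * 2 ^ N) := by
          gcongr <;> first | linarith | exact h1 | exact h2
      _ = K2 * 2 ^ N := by ring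
  · intro k x x' hxx
    have h1 := hz.2 k x x' hxx
    have h2 := hz1.2 k x x' hxx
    have heq : (z x + t * (z1 x - z x)) - (z x' + t * (z1 x' - z x'))
        = (1 - t) * (z x - z x') + t * (z1 x - z1 x') := by ring
    show |(z x + t * (z1 x - z x)) - (z x' + t * (z1 x' - z x'))| ≤ _
    rw [heq]
    calc |(1 - t) * (z x - z x') + t * (z1 x - z1 x')|
        ≤ (1 - t) * |z x - z x'| + t * |z1 x - z1 x'| := by
          refine (abs_add_le _ _).trans ?_
          rw [abs_mul, abs_mul, abs_of_nonneg (by linarith), abs_of_nonneg ht0]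
      _ ≤ (1 - t) * (K2 * 2 ^ (N - 1) * ‖x k - x' k‖)
            + t * (K2 * 2 ^ (N - 1) * ‖x k - x' k‖) := by
          gcongr <;> first | linarith | exact h1 | exact h2
      _ = K2 * 2 ^ (N - 1) * ‖x k - x' k‖ := by ring

lemma between_measure_le {N : ℕ} {R : ℝ} [Fact (0 < R)] {K2 CK δ : ℝ}
    (hδ : 0 < δ) (hCK0 : 0 ≤ CK)
    (D z z1 : (Fin N → AddCircle R) → ℝ)
    (hz : MemLKTorus N R K2 z) (hz1 : MemLKTorus N R K2 z1)
    (hclose : ∀ x, |z x - z1 x| ≤ 2 * δ)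
    (hμ : ∀ f, MemLKTorus N R K2 f → ∀ ε ∈ Set.Ioo (0 : ℝ) 1,
        (volume {x : Fin N → AddCircle R | |D x - f x| ≤ ε}).toReal ≤ CK * ε) :
    (volume {x : Fin N → AddCircle R | D x ∈ Set.uIcc (z x) (z1 x)}).toReal ≤ CK * δ := by
  set n : ℕ := ⌈δ⌉₊ + 1 with hn
  have hnδ : δ < n := by
    have := Nat.le_ceil δ
    push_cast [hn]
    linarith
  have hn0 : (0 : ℝ) < n := lt_trans hδ hnδ
  set ε : ℝ := δ / n with hε
  have hε0 : 0 < ε := div_pos hδ hn0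
  have hε1 : ε < 1 := (div_lt_one hn0).mpr hnδ
  set t : ℕ → ℝ := fun k => (2 * k + 1) / (2 * n) with htdef
  have ht01 : ∀ k, k < n → 0 ≤ t k ∧ t k ≤ 1 := by
    intro k hk
    have hk' : (k : ℝ) ≤ (n : ℝ) - 1 := by
      have : (k : ℝ) + 1 ≤ n := by exact_mod_cast Nat.succ_le_of_lt hk
      linarith
    constructor
    · apply div_nonneg (by positivity) (by positivity)
    · rw [div_le_one (by positivity)]
      linarith
  set A : ℕ → Set (Fin N → AddCircle R) :=
    fun k => {x | |D x - (z x + t k * (z1 x - z x))| ≤ ε} with hA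
  have hsub : {x : Fin N → AddCircle R | D x ∈ Set.uIcc (z x) (z1 x)}
      ⊆ ⋃ k ∈ Finset.range n, A k := by
    intro x hx
    simp only [Set.mem_setOf_eq] at hx
    -- find s ∈ [0,1] with D x = z x + s * (z1 x - z x)
    obtain ⟨s, hs0, hs1, hsD⟩ : ∃ s : ℝ, 0 ≤ s ∧ s ≤ 1 ∧ D x = z x + s * (z1 x - z x) := by
      rcases eq_or_ne (z1 x) (z x) with h | h
      · refine ⟨0, le_refl _, zero_le_one, ?_⟩
        rw [Set.uIcc_of_le (by rw [h])] at hx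
        have : D x = z x := le_antisymm (by simpa [h] using hx.2) hx.1
        simp [this]
      · have hsD : D x = z x + (D x - z x) / (z1 x - z x) * (z1 x - z x) := by
          rw [div_mul_cancel₀ _ (sub_ne_zero.mpr h)]; ring
        rcases lt_or_gt_of_ne h with hlt | hgt
        · rw [Set.uIcc_of_ge (le_of_lt hlt)] at hx
          have hrw : (D x - z x) / (z1 x - z x) = (z x - D x) / (z x - z1 x) := by
            rw [← neg_div_neg_eq]; ring_nf
          refine ⟨(D x - z x) / (z1 x - z x), ?_, ?_, hsD⟩
          · rw [hrw]
            exact div_nonneg (by linarith [hx.2]) (by linarith)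
          · rw [hrw, div_le_one (by linarith)]
            linarith [hx.1]
        · rw [Set.uIcc_of_le (le_of_lt hgt)] at hx
          refine ⟨(D x - z x) / (z1 x - z x), ?_, ?_, hsD⟩
          · exact div_nonneg (by linarith [hx.1]) (by linarith)
          · rw [div_le_one (by linarith)]
            linarith [hx.2]
    set k : ℕ := min (⌊s * n⌋₊) (n - 1) with hk
    have hkn : k < n := by
      have : n - 1 < n := by omega
      exact lt_of_le_of_lt (min_le_right _ _) this
    have hbound : (k : ℝ) ≤ s * n ∧ s * n ≤ (k : ℝ) + 1 := by
      by_cases hcase : ⌊s * n⌋₊ ≤ n - 1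
      · have hkeq : k = ⌊s * n⌋₊ := by omega
        constructor
        · rw [hkeq]; exact Nat.floor_le (by positivity)
        · rw [hkeq]; exact le_of_lt (Nat.lt_floor_add_one _)
      · have hge : n ≤ ⌊s * n⌋₊ := by omega
        have hsn : (n : ℝ) ≤ s * n := by
          exact_mod_cast (Nat.le_floor_iff (by positivity)).mp hge
        have hs1' : s = 1 := by
          have : s * n ≤ 1 * n := by nlinarith
          have : s ≥ 1 := by nlinarith
          linarith
        have hkeq : k = n - 1 := by omega
        have : (k : ℝ) = (n : ℝ) - 1 := by
          rw [hkeq]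
          have : (1 : ℕ) ≤ n := by omega
          push_cast [this]
          ring
        rw [this, hs1']
        constructor <;> linarith
    refine Set.mem_biUnion (Finset.mem_range.mpr hkn) ?_
    simp only [hA, Set.mem_setOf_eq]
    have hst : |s - t k| ≤ 1 / (2 * n) := by
      have htk : t k = (2 * (k : ℝ) + 1) / (2 * n) := rfl
      rw [abs_le, htk]
      constructor
      · have e1 : s - (2 * (k : ℝ) + 1) / (2 * n) + 1 / (2 * n) = (s * n - k) / n := by
          field_simp; ring
        have e2 : (0 : ℝ) ≤ (s * n - k) / n := div_nonneg (by linarith [hbound.1]) hn0.le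
        rw [← e1] at e2
        linarith
      · have e1 : 1 / (2 * n) - (s - (2 * (k : ℝ) + 1) / (2 * n)) = ((k : ℝ) + 1 - s * n) / n := by
          field_simp; ring
        have e2 : (0 : ℝ) ≤ ((k : ℝ) + 1 - s * n) / n := div_nonneg (by linarith [hbound.2]) hn0.le
        rw [← sub_nonneg, ← e1] at e2
        linarith [e2]
    have hzz : |z x - z1 x| ≤ 2 * δ := hclose x
    have hcalc : D x - (z x + t k * (z1 x - z x)) = (s - t k) * (z1 x - z x) := by
      rw [hsD]; ring
    rw [hcalc, abs_mul]
    calc |s - t k| * |z1 x - z x| ≤ (1 / (2 * n)) * (2 * δ) := by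
          apply mul_le_mul hst _ (abs_nonneg _) (by positivity)
          rw [abs_sub_comm]; exact hzz
      _ = ε := by rw [hε]; field_simp
  -- measure bound
  have hAk : ∀ k ∈ Finset.range n, volume (A k) ≤ ENNReal.ofReal (CK * ε) := by
    intro k hk
    rw [Finset.mem_range] at hk
    have hmem := memLK_combo hz hz1 (ht01 k hk).1 (ht01 k hk).2
    have := hμ _ hmem ε ⟨hε0, hε1⟩
    rw [← ENNReal.le_ofReal_iff_toReal_le (measure_ne_top _ _) (by positivity)] at this
    exact this
  calc (volume {x : Fin N → AddCircle R | D x ∈ Set.uIcc (z x) (z1 x)}).toReal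
      ≤ (volume (⋃ k ∈ Finset.range n, A k)).toReal := by
        apply ENNReal.toReal_mono (measure_ne_top _ _) (measure_mono hsub)
    _ ≤ ((Finset.range n).card • ENNReal.ofReal (CK * ε)).toReal := by
        apply ENNReal.toReal_mono
        · simp [ENNReal.smul_def, ENNReal.mul_eq_top]
        · exact le_trans (measure_biUnion_finset_le _ _)
            (le_trans (Finset.sum_le_sum hAk) (by rw [Finset.sum_const]))
    _ = n * (CK * ε) := by
        rw [Finset.card_range, nsmul_eq_mul, ENNReal.toReal_mul, ENNReal.toReal_ofReal (by positivity)]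
        simp
    _ = CK * δ := by
        rw [hε]; field_simp
/-- If each difference `B_m - B_{m'}` has occupation density over `𝓛^{2K}` uniformly bounded by
`C_K` (i.e. `λ{x : |(B_m - B_{m'})(x) - f(x)| ≤ ε} ≤ C_K ε` for all `f ∈ 𝓛^{2K}`, `ε ∈ (0,1)`),
then the continuum Schelling drift map `φ^ω`, restricted to `𝓛^K_M`, is Lipschitz for the
supremum norm with constant at most `2M(M-1)C_K`. -/
theorem stmt16 (N M : ℕ) (hM : 2 ≤ M) (R : ℝ) [Fact (0 < R)]
    (𝒩 : Set (Fin N → AddCircle R)) (h𝒩 : MeasurableSet 𝒩)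
    (B : (Fin N → AddCircle R) → Fin M → ℝ) (hB : Continuous B)
    (K : ℝ) (hK : 0 < K) (CK : ℝ)
    (hCK : ∀ m1 m2 : Fin M, m1 ≠ m2 → ∀ f : (Fin N → AddCircle R) → ℝ,
      MemLKTorus N R (2 * K) f → ∀ ε ∈ Set.Ioo (0 : ℝ) 1,
        (volume {x : Fin N → AddCircle R |
          |(B x m1 - B x m2) - f x| ≤ ε}).toReal ≤ CK * ε) :
    ∀ y ytil : (Fin N → AddCircle R) → Fin M → ℝ,
      (∀ m : Fin M, MemLKTorus N R K fun x => y x m) →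
      (∀ m : Fin M, MemLKTorus N R K fun x => ytil x m) →
      ∀ δ : ℝ, 0 < δ → (∀ x m, |y x m - ytil x m| ≤ δ) →
      ∀ m : Fin M, ∀ x : Fin N → AddCircle R,
        |(∫ x' in {z : Fin N → AddCircle R | z - x ∈ 𝒩},
            (if plur (fun m' => B x' m' + y x' m') = some m
              then 1 - (M : ℝ)⁻¹ else -(M : ℝ)⁻¹)) -
          (∫ x' in {z : Fin N → AddCircle R | z - x ∈ 𝒩},
            (if plur (fun m' => B x' m' + ytil x' m') = some m
              then 1 - (M : ℝ)⁻¹ else -(M : ℝ)⁻¹))| ≤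
        2 * M * (M - 1) * CK * δ := by
  intro y ytil hy hytil δ hδ hclose m x
  classical
  have hM1 : (1 : ℝ) ≤ (M : ℝ) := by exact_mod_cast le_trans (by norm_num) hM
  -- CK is nonnegative
  have hCK0 : 0 ≤ CK := by
    have h01 : (0 : ℕ) < M := by omega
    have h11 : (1 : ℕ) < M := by omega
    have hne : (⟨0, h01⟩ : Fin M) ≠ ⟨1, h11⟩ := Fin.ne_of_val_ne (by norm_num)
    have hzero : MemLKTorus N R (2 * K) (fun _ => (0 : ℝ)) := by
      constructor
      · intro x; simp; positivity
      · intro k x x' _; simp; positivity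
    have hb := hCK _ _ hne _ hzero (1/2) ⟨by norm_num, by norm_num⟩
    have h0 : (0 : ℝ) ≤ CK * (1/2) := le_trans ENNReal.toReal_nonneg hb
    linarith
  -- continuity of the fields
  have hyc : ∀ m' : Fin M, Continuous fun x => y x m' :=
    fun m' => memLK_continuous hK.le (hy m')
  have hytc : ∀ m' : Fin M, Continuous fun x => ytil x m' :=
    fun m' => memLK_continuous hK.le (hytil m')
  set S : Set (Fin N → AddCircle R) := {z | z - x ∈ 𝒩} with hS
  set P1 : Set (Fin N → AddCircle R) :=
    {x' | plur (fun m' => B x' m' + y x' m') = some m} with hP1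
  set P2 : Set (Fin N → AddCircle R) :=
    {x' | plur (fun m' => B x' m' + ytil x' m') = some m} with hP2
  have hPmeas : ∀ (w : (Fin N → AddCircle R) → Fin M → ℝ),
      (∀ m', Continuous fun x => w x m') →
      MeasurableSet {x' | plur (fun m' => B x' m' + w x' m') = some m} := by
    intro w hw
    have heq : {x' | plur (fun m' => B x' m' + w x' m') = some m}
        = ⋂ m', ⋂ (_ : m' ≠ m), {x' | B x' m' + w x' m' < B x' m + w x' m} := by
      ext x'
      simp only [Set.mem_setOf_eq, Set.mem_iInter, plur_eq_some_iff]
    rw [heq]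
    refine MeasurableSet.iInter fun m' => MeasurableSet.iInter fun _ => ?_
    exact (isOpen_lt (((continuous_apply m').comp hB).add (hw m'))
      (((continuous_apply m).comp hB).add (hw m))).measurableSet
  have hP1m : MeasurableSet P1 := hPmeas y hyc
  have hP2m : MeasurableSet P2 := hPmeas ytil hytc
  set F : (Fin N → AddCircle R) → ℝ := fun x' =>
    if plur (fun m' => B x' m' + y x' m') = some m then 1 - (M : ℝ)⁻¹ else -(M : ℝ)⁻¹ with hF
  set G : (Fin N → AddCircle R) → ℝ := fun x' =>
    if plur (fun m' => B x' m' + ytil x' m') = some m then 1 - (M : ℝ)⁻¹ else -(M : ℝ)⁻¹ with hG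
  have hFmeas : Measurable F := Measurable.ite hP1m measurable_const measurable_const
  have hGmeas : Measurable G := Measurable.ite hP2m measurable_const measurable_const
  have hbnd : ∀ (H : (Fin N → AddCircle R) → ℝ), Measurable H →
      (∀ x', ‖H x'‖ ≤ 1) → IntegrableOn H S volume := by
    intro H hm hb
    refine Integrable.mono' (integrable_const 1) hm.aestronglyMeasurable.restrict ?_
    filter_upwards with x' using hb x'
  have hMinv0 : (0 : ℝ) ≤ (M : ℝ)⁻¹ := by positivity
  have hMinv1 : (M : ℝ)⁻¹ ≤ 1 := by
    rw [inv_le_one_iff₀]; right; exact hM1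
  have habs : ∀ (c : Prop) (inst : Decidable c),
      ‖if c then 1 - (M : ℝ)⁻¹ else -(M : ℝ)⁻¹‖ ≤ 1 := by
    intro c inst
    rw [Real.norm_eq_abs]
    split <;> rw [abs_le] <;> constructor <;> linarith
  have hnorm : ∀ x', ‖F x'‖ ≤ 1 ∧ ‖G x'‖ ≤ 1 := fun x' => ⟨habs _ _, habs _ _⟩
  have hFint : IntegrableOn F S volume := hbnd F hFmeas fun x' => (hnorm x').1
  have hGint : IntegrableOn G S volume := hbnd G hGmeas fun x' => (hnorm x').2
  set Dset : Set (Fin N → AddCircle R) := (P1 \ P2) ∪ (P2 \ P1) with hD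
  have hDm : MeasurableSet Dset := (hP1m.diff hP2m).union (hP2m.diff hP1m)
  -- pointwise bound
  have hpt : ∀ x', |F x' - G x'| ≤ Dset.indicator (fun _ => (1 : ℝ)) x' := by
    intro x'
    have eF1 : x' ∈ P1 → F x' = 1 - (M : ℝ)⁻¹ := fun h => by
      have h' : (plur fun m' => B x' m' + y x' m') = some m := h
      simp only [hF]; rw [if_pos h']
    have eF2 : x' ∉ P1 → F x' = -(M : ℝ)⁻¹ := fun h => by
      have h' : ¬ ((plur fun m' => B x' m' + y x' m') = some m) := h
      simp only [hF]; rw [if_neg h']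
    have eG1 : x' ∈ P2 → G x' = 1 - (M : ℝ)⁻¹ := fun h => by
      have h' : (plur fun m' => B x' m' + ytil x' m') = some m := h
      simp only [hG]; rw [if_pos h']
    have eG2 : x' ∉ P2 → G x' = -(M : ℝ)⁻¹ := fun h => by
      have h' : ¬ ((plur fun m' => B x' m' + ytil x' m') = some m) := h
      simp only [hG]; rw [if_neg h']
    by_cases h1 : x' ∈ P1 <;> by_cases h2 : x' ∈ P2
    · rw [eF1 h1, eG1 h2, sub_self, abs_zero]
      exact Set.indicator_nonneg (fun _ _ => zero_le_one) x'
    · have hin : x' ∈ Dset := Or.inl ⟨h1, h2⟩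
      rw [Set.indicator_of_mem hin, eF1 h1, eG2 h2]
      rw [show (1 - (M : ℝ)⁻¹) - -(M : ℝ)⁻¹ = 1 by ring, abs_one]
    · have hin : x' ∈ Dset := Or.inr ⟨h2, h1⟩
      rw [Set.indicator_of_mem hin, eF2 h1, eG1 h2]
      rw [show -(M : ℝ)⁻¹ - (1 - (M : ℝ)⁻¹) = -1 by ring, abs_neg, abs_one]
    · rw [eF2 h1, eG2 h2, sub_self, abs_zero]
      exact Set.indicator_nonneg (fun _ _ => zero_le_one) x'
  -- the bad set is contained in the union over ordered pairs of "between" sets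
  set E : Fin M × Fin M → Set (Fin N → AddCircle R) := fun p =>
    {x' | B x' p.1 - B x' p.2 ∈
      Set.uIcc (y x' p.2 - y x' p.1) (ytil x' p.2 - ytil x' p.1)} with hE
  set pairs : Finset (Fin M × Fin M) := Finset.univ.filter fun p => p.1 ≠ p.2 with hpairs
  have hcase : ∀ (w wt : (Fin N → AddCircle R) → Fin M → ℝ) (x' : Fin N → AddCircle R),
      plur (fun m' => B x' m' + w x' m') = some m →
      plur (fun m' => B x' m' + wt x' m') ≠ some m →
      ∃ m'', m'' ≠ m ∧ w x' m'' - w x' m < B x' m - B x' m''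
        ∧ B x' m - B x' m'' ≤ wt x' m'' - wt x' m := by
    intro w wt x' h1 h2
    rw [plur_eq_some_iff] at h1
    rw [ne_eq, plur_eq_some_iff] at h2
    push_neg at h2
    obtain ⟨m'', hm''ne, hm''⟩ := h2
    exact ⟨m'', hm''ne, by linarith [h1 m'' hm''ne], by linarith⟩
  have hDsub : Dset ⊆ ⋃ p ∈ pairs, E p := by
    intro x' hx'
    rcases hx' with ⟨h1, h2⟩ | ⟨h2, h1⟩
    · obtain ⟨m'', hne, hlt, hle⟩ := hcase y ytil x' h1 h2
      refine Set.mem_iUnion₂.mpr ⟨((m, m'') : Fin M × Fin M), ?_, ?_⟩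
      · rw [hpairs, Finset.mem_filter]
        exact ⟨Finset.mem_univ _, Ne.symm hne⟩
      · simp only [hE, Set.mem_setOf_eq]
        rw [Set.mem_uIcc]
        left; exact ⟨le_of_lt hlt, hle⟩
    · obtain ⟨m'', hne, hlt, hle⟩ := hcase ytil y x' h2 h1
      refine Set.mem_iUnion₂.mpr ⟨((m, m'') : Fin M × Fin M), ?_, ?_⟩
      · rw [hpairs, Finset.mem_filter]
        exact ⟨Finset.mem_univ _, Ne.symm hne⟩
      · simp only [hE, Set.mem_setOf_eq]
        rw [Set.mem_uIcc]
        right; exact ⟨le_of_lt hlt, hle⟩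
  -- measure of each between set
  have hEp : ∀ p ∈ pairs, (volume (E p)).toReal ≤ CK * δ := by
    intro p hp
    rw [hpairs, Finset.mem_filter] at hp
    have hpne := hp.2
    have hzK : MemLKTorus N R (2 * K) fun x' => y x' p.2 - y x' p.1 := by
      obtain ⟨ha1, ha2⟩ := hy p.2
      obtain ⟨hb1, hb2⟩ := hy p.1
      constructor
      · intro x0
        calc |y x0 p.2 - y x0 p.1| ≤ |y x0 p.2| + |y x0 p.1| := abs_sub _ _
          _ ≤ K * 2 ^ N + K * 2 ^ N := add_le_add (ha1 x0) (hb1 x0)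
          _ = 2 * K * 2 ^ N := by ring
      · intro k x0 x0' hxx
        have e : y x0 p.2 - y x0 p.1 - (y x0' p.2 - y x0' p.1)
            = (y x0 p.2 - y x0' p.2) - (y x0 p.1 - y x0' p.1) := by ring
        calc |y x0 p.2 - y x0 p.1 - (y x0' p.2 - y x0' p.1)|
            ≤ |y x0 p.2 - y x0' p.2| + |y x0 p.1 - y x0' p.1| := by rw [e]; exact abs_sub _ _
          _ ≤ K * 2 ^ (N - 1) * ‖x0 k - x0' k‖ + K * 2 ^ (N - 1) * ‖x0 k - x0' k‖ :=
              add_le_add (ha2 k x0 x0' hxx) (hb2 k x0 x0' hxx)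
          _ = 2 * K * 2 ^ (N - 1) * ‖x0 k - x0' k‖ := by ring
    have hz1K : MemLKTorus N R (2 * K) fun x' => ytil x' p.2 - ytil x' p.1 := by
      obtain ⟨ha1, ha2⟩ := hytil p.2
      obtain ⟨hb1, hb2⟩ := hytil p.1
      constructor
      · intro x0
        calc |ytil x0 p.2 - ytil x0 p.1| ≤ |ytil x0 p.2| + |ytil x0 p.1| := abs_sub _ _
          _ ≤ K * 2 ^ N + K * 2 ^ N := add_le_add (ha1 x0) (hb1 x0)
          _ = 2 * K * 2 ^ N := by ring
      · intro k x0 x0' hxx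
        have e : ytil x0 p.2 - ytil x0 p.1 - (ytil x0' p.2 - ytil x0' p.1)
            = (ytil x0 p.2 - ytil x0' p.2) - (ytil x0 p.1 - ytil x0' p.1) := by ring
        calc |ytil x0 p.2 - ytil x0 p.1 - (ytil x0' p.2 - ytil x0' p.1)|
            ≤ |ytil x0 p.2 - ytil x0' p.2| + |ytil x0 p.1 - ytil x0' p.1| := by
              rw [e]; exact abs_sub _ _
          _ ≤ K * 2 ^ (N - 1) * ‖x0 k - x0' k‖ + K * 2 ^ (N - 1) * ‖x0 k - x0' k‖ :=
              add_le_add (ha2 k x0 x0' hxx) (hb2 k x0 x0' hxx)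
          _ = 2 * K * 2 ^ (N - 1) * ‖x0 k - x0' k‖ := by ring
    have hcl : ∀ x0, |(y x0 p.2 - y x0 p.1) - (ytil x0 p.2 - ytil x0 p.1)| ≤ 2 * δ := by
      intro x0
      have e : (y x0 p.2 - y x0 p.1) - (ytil x0 p.2 - ytil x0 p.1)
          = (y x0 p.2 - ytil x0 p.2) - (y x0 p.1 - ytil x0 p.1) := by ring
      calc |(y x0 p.2 - y x0 p.1) - (ytil x0 p.2 - ytil x0 p.1)|
          ≤ |y x0 p.2 - ytil x0 p.2| + |y x0 p.1 - ytil x0 p.1| := by rw [e]; exact abs_sub _ _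
        _ ≤ δ + δ := add_le_add (hclose x0 p.2) (hclose x0 p.1)
        _ = 2 * δ := by ring
    exact between_measure_le hδ hCK0 _ _ _ hzK hz1K hcl (hCK p.1 p.2 hpne)
  -- combine
  have hmain : |(∫ x' in S, F x') - ∫ x' in S, G x'| ≤ (volume Dset).toReal := by
    rw [← integral_sub hFint hGint]
    have hIind : Integrable (Dset.indicator fun _ => (1 : ℝ)) volume :=
      (integrable_const (1 : ℝ)).indicator hDm
    calc |∫ x' in S, (F x' - G x')| ≤ ∫ x' in S, |F x' - G x'| := by
          simpa [Real.norm_eq_abs] using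
            norm_integral_le_integral_norm (μ := volume.restrict S) fun x' => F x' - G x'
      _ ≤ ∫ x' in S, Dset.indicator (fun _ => (1 : ℝ)) x' := by
          refine integral_mono ((hFint.sub hGint).abs) hIind.restrict fun x' => hpt x'
      _ ≤ ∫ x', Dset.indicator (fun _ => (1 : ℝ)) x' := by
          refine setIntegral_le_integral hIind ?_
          filter_upwards with x' using Set.indicator_nonneg (fun _ _ => zero_le_one) x'
      _ = (volume Dset).toReal := integral_indicator_one hDm
  refine le_trans hmain ?_
  -- measure of Dset
  have hsum : volume Dset ≤ ∑ p ∈ pairs, volume (E p) :=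
    le_trans (measure_mono hDsub) (measure_biUnion_finset_le _ _)
  have htR : (volume Dset).toReal ≤ ∑ p ∈ pairs, (volume (E p)).toReal := by
    rw [← ENNReal.toReal_sum (fun p _ => measure_ne_top _ _)]
    exact ENNReal.toReal_mono (by
      rw [← lt_top_iff_ne_top]
      exact ENNReal.sum_lt_top.mpr fun p _ => measure_lt_top _ _) hsum
  refine le_trans htR ?_
  calc ∑ p ∈ pairs, (volume (E p)).toReal ≤ ∑ _p ∈ pairs, CK * δ := Finset.sum_le_sum hEp
    _ = pairs.card * (CK * δ) := by rw [Finset.sum_const, nsmul_eq_mul]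
    _ ≤ (M * M : ℕ) * (CK * δ) := by
        have hc : pairs.card ≤ M * M := by
          calc pairs.card ≤ (Finset.univ : Finset (Fin M × Fin M)).card := Finset.card_filter_le _ _
            _ = M * M := by simp
        have : (pairs.card : ℝ) ≤ (M * M : ℕ) := by exact_mod_cast hc
        exact mul_le_mul_of_nonneg_right this (by positivity)
    _ ≤ 2 * M * (M - 1) * CK * δ := by
        have hMr : (2 : ℝ) ≤ (M : ℝ) := by exact_mod_cast hM
        have h1 : (0 : ℝ) ≤ (M : ℝ) * ((M : ℝ) - 2) := mul_nonneg (by linarith) (by linarith)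
        have h2 : (0 : ℝ) ≤ CK * δ := mul_nonneg hCK0 hδ.le
        push_cast
        nlinarith [mul_nonneg h1 h2]
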